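/- Let k ≤ l be integers and let S be a finite interval of integers containing {2k−1, 2k, …, 2l+1}. Then the Nicolai supercharge is nilpotent: Q[k,l] Q[k,l] = 0, and consequently Q[k,l]* Q[k,l]* = 0. -/

import Mathlib

namespace Nicolai

/-- Configurations on the finite interval `S = {a, …, b}` of integers:
`true` = occupied, `false` = empty. -/
abbrev Config (a b : ℤ) : Type := {i : ℤ // i ∈ Finset.Icc a b} → Bool

/-- The Hilbert space `ℋ_S` with orthonormal basis indexed by configurations. -/
abbrev Hs (a b : ℤ) : Type := EuclideanSpace ℂ (Config a b)

/-- The basis vector `e_g` associated to the configuration `g`. -/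
noncomputable def e (a b : ℤ) (g : Config a b) : Hs a b := EuclideanSpace.single g 1

/-- The Jordan–Wigner sign exponent: the number of occupied sites strictly to the left of `i`. -/
noncomputable def signCount (a b : ℤ) (g : Config a b) (i : ℤ) : ℕ :=
  (Finset.univ.filter fun j : {x : ℤ // x ∈ Finset.Icc a b} => j.1 < i ∧ g j = true).card

/-- The annihilation operator `c_i` (zero if `i ∉ S`). -/
noncomputable def cAnn (a b : ℤ) (i : ℤ) : Module.End ℂ (Hs a b) where
  toFun ψ := WithLp.toLp 2 fun g =>
    if hi : i ∈ Finset.Icc a b then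
      if g ⟨i, hi⟩ = false then
        ((-1 : ℂ) ^ signCount a b g i) * ψ (Function.update g ⟨i, hi⟩ true)
      else 0
    else 0
  map_add' ψ φ := by
    ext g
    simp only [PiLp.add_apply, PiLp.toLp_apply]
    split_ifs <;> simp [mul_add]
  map_smul' c ψ := by
    ext g
    simp only [PiLp.toLp_apply, PiLp.smul_apply, smul_eq_mul, RingHom.id_apply]
    split_ifs <;> ring

/-- The creation operator `c*_i` (zero if `i ∉ S`). -/
noncomputable def cCr (a b : ℤ) (i : ℤ) : Module.End ℂ (Hs a b) where
  toFun ψ := WithLp.toLp 2 fun g =>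
    if hi : i ∈ Finset.Icc a b then
      if g ⟨i, hi⟩ = true then
        ((-1 : ℂ) ^ signCount a b g i) * ψ (Function.update g ⟨i, hi⟩ false)
      else 0
    else 0
  map_add' ψ φ := by
    ext g
    simp only [PiLp.add_apply, PiLp.toLp_apply]
    split_ifs <;> simp [mul_add]
  map_smul' c ψ := by
    ext g
    simp only [PiLp.toLp_apply, PiLp.smul_apply, smul_eq_mul, RingHom.id_apply]
    split_ifs <;> ring

/-- `q_{2i} = c_{2i+1} c*_{2i} c_{2i−1}`. -/
noncomputable def qOp (a b i : ℤ) : Module.End ℂ (Hs a b) :=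
  cAnn a b (2 * i + 1) * cCr a b (2 * i) * cAnn a b (2 * i - 1)

/-- The Nicolai supercharge `Q[k,l] = Σ_{i=k}^{l} q_{2i}`. -/
noncomputable def QNic (a b k l : ℤ) : Module.End ℂ (Hs a b) :=
  ∑ i ∈ Finset.Icc k l, qOp a b i

/-- Membership in `Ξ̂_{k,l}`: a `{−1,+1}`-valued function on `{2k, …, 2l}` with no
forbidden sign triplet at interior even sites, constant on each two-site edge. -/
def memXi (k l : ℤ) (f : ℤ → ℤ) : Prop :=
  (∀ i ∈ Finset.Icc (2 * k) (2 * l), f i = 1 ∨ f i = -1) ∧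
  (∀ i : ℤ, k < i → i < l →
    ¬(f (2 * i - 1) = -1 ∧ f (2 * i) = 1 ∧ f (2 * i + 1) = -1) ∧
    ¬(f (2 * i - 1) = 1 ∧ f (2 * i) = -1 ∧ f (2 * i + 1) = 1)) ∧
  f (2 * k) = f (2 * k + 1) ∧ f (2 * l - 1) = f (2 * l)

/-- `ζ_i(+1) = c*_i`, `ζ_i(−1) = c_i`. -/
noncomputable def zeta (a b i : ℤ) (v : ℤ) : Module.End ℂ (Hs a b) :=
  if v = 1 then cCr a b i else if v = -1 then cAnn a b i else 0

/-- The local fermion operator `Q(f) = ζ_{2k}(f(2k)) ζ_{2k+1}(f(2k+1)) ⋯ ζ_{2l}(f(2l))`,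
the product taken in increasing site order. -/
noncomputable def QF (a b k l : ℤ) (f : ℤ → ℤ) : Module.End ℂ (Hs a b) :=
  ((List.range (2 * l - 2 * k + 1).toNat).map
    (fun j => zeta a b (2 * k + (j : ℤ)) (f (2 * k + (j : ℤ))))).prod

/-- `g` has a forbidden triplet at the even site `2i`. -/
def forbiddenAt (g : ℤ → Bool) (i : ℤ) : Prop :=
  (g (2 * i - 1) = false ∧ g (2 * i) = true ∧ g (2 * i + 1) = false) ∨
  (g (2 * i - 1) = true ∧ g (2 * i) = false ∧ g (2 * i + 1) = true)

/-- Membership in `Υ̂_{k,l}`: no forbidden triplet at interior even sites and the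
open SUSY boundary condition (only the values on `{2k, …, 2l}` are relevant). -/
def memUps (k l : ℤ) (g : ℤ → Bool) : Prop :=
  (∀ i : ℤ, k < i → i < l → ¬ forbiddenAt g i) ∧
  g (2 * k) = g (2 * k + 1) ∧ g (2 * l - 1) = g (2 * l)

/-- Extend a configuration on `S` to all of `ℤ` by `false`. -/
noncomputable def ext (a b : ℤ) (g : Config a b) : ℤ → Bool :=
  fun i => if h : i ∈ Finset.Icc a b then g ⟨i, h⟩ else false

/-- The charge `f ∈ Ξ̂_{k,l}` is applicable to the configuration `g`. -/
def applicable (k l : ℤ) (f : ℤ → ℤ) (g : ℤ → Bool) : Prop :=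
  ∀ i : ℤ, 2 * k ≤ i → i ≤ 2 * l → (f i = 1 → g i = false) ∧ (f i = -1 → g i = true)

/-- The configuration `f·g` resulting from the action of the charge `f ∈ Ξ̂_{k,l}` on `g`. -/
def applyCharge (k l : ℤ) (f : ℤ → ℤ) (g : ℤ → Bool) : ℤ → Bool :=
  fun i => if 2 * k ≤ i ∧ i ≤ 2 * l then decide (f i = 1) else g i

/-- `Reachable p q g₀ g`: `g` is obtained from `g₀` by finitely many applications of
applicable charges from `Ξ̂(p,q) = ⋃_{p ≤ k < l ≤ q} Ξ̂_{k,l}`. -/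
inductive Reachable (p q : ℤ) : (ℤ → Bool) → (ℤ → Bool) → Prop
  | refl (g : ℤ → Bool) : Reachable p q g g
  | step {g₀ g : ℤ → Bool} (k l : ℤ) (f : ℤ → ℤ) :
      Reachable p q g₀ g → p ≤ k → k < l → l ≤ q → memXi k l f → applicable k l f g →
      Reachable p q g₀ (applyCharge k l f g)

/-- The fermion parity operator `P e_g = (−1)^{#occupied sites} e_g`. -/
noncomputable def parity (a b : ℤ) : Module.End ℂ (Hs a b) where
  toFun ψ := WithLp.toLp 2 fun g =>
    ((-1 : ℂ) ^ (Finset.univ.filter fun j : {x : ℤ // x ∈ Finset.Icc a b} => g j = true).card)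
      * ψ g
  map_add' ψ φ := by
    ext g
    simp only [PiLp.add_apply, PiLp.toLp_apply]
    ring
  map_smul' c ψ := by
    ext g
    simp only [PiLp.toLp_apply, PiLp.smul_apply, smul_eq_mul, RingHom.id_apply]
    ring

section AC
variable {R : Type*} [Ring R] {x y z w y1 y2 y3 : R}

/-- Anticommuting elements. -/
def AC (x y : R) : Prop := x * y = -(y * x)

lemma AC.symm (h : AC x y) : AC y x := by
  unfold AC at *
  rw [h, neg_neg]

lemma AC.commute (h1 : AC x y) (h2 : AC x z) : x * (y * z) = (y * z) * x := by
  calc x * (y * z) = (x * y) * z := (mul_assoc _ _ _).symm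
    _ = (-(y * x)) * z := by rw [h1]
    _ = -(y * (x * z)) := by rw [neg_mul, mul_assoc]
    _ = -(y * (-(z * x))) := by rw [h2]
    _ = (y * z) * x := by rw [mul_neg, neg_neg, ← mul_assoc]

lemma AC.mul_right3 (h1 : AC x y1) (h2 : AC x y2) (h3 : AC x y3) :
    AC x (y1 * y2 * y3) := by
  unfold AC
  calc x * (y1 * y2 * y3) = (x * (y1 * y2)) * y3 := (mul_assoc _ _ _).symm
    _ = ((y1 * y2) * x) * y3 := by rw [h1.commute h2]
    _ = (y1 * y2) * (x * y3) := by rw [mul_assoc]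
    _ = (y1 * y2) * (-(y3 * x)) := by rw [h3]
    _ = -((y1 * y2 * y3) * x) := by rw [mul_neg, ← mul_assoc]


lemma AC.mul_left3 (h1 : AC y1 x) (h2 : AC y2 x) (h3 : AC y3 x) :
    AC (y1 * y2 * y3) x :=
  (AC.mul_right3 h1.symm h2.symm h3.symm).symm

lemma sq_sandwich (h : x * w = w * x) (hx : x * x = 0) : (x * w) * x = 0 := by
  rw [h, mul_assoc, hx, mul_zero]

end AC

section AC2
variable {R : Type*} [Ring R] {x y z x' y' : R}

lemma AC.swap (h : AC x y) (c : R) : x * (y * c) = -(y * (x * c)) := by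
  rw [← mul_assoc, h, neg_mul, mul_assoc]

lemma nilp_sq (hxy : AC x y) (hxz : AC x z) (hx : x * x = 0) :
    (x * y * z) * (x * y * z) = 0 := by
  simp only [mul_assoc]
  rw [hxz.symm.swap]
  simp only [mul_neg, neg_neg, neg_mul]
  rw [hxy.symm.swap]
  simp only [mul_neg, neg_neg, neg_mul]
  rw [← mul_assoc x x, hx, zero_mul]

lemma nilp_adj1 (hxy : AC x y) (hxz : AC x z) (hxp : AC x x') (hyp : AC x y')
    (hx : x * x = 0) : (x * y * z) * (x' * y' * x) = 0 := by
  simp only [mul_assoc]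
  rw [hyp.symm]
  simp only [mul_neg, neg_neg, neg_mul]
  rw [hxp.symm.swap]
  simp only [mul_neg, neg_neg, neg_mul]
  rw [hxz.symm.swap]
  simp only [mul_neg, neg_neg, neg_mul]
  rw [hxy.symm.swap]
  simp only [mul_neg, neg_neg, neg_mul]
  rw [← mul_assoc x x, hx, zero_mul]

lemma nilp_adj2 (hx : x * x = 0) : (x' * y' * x) * (x * y * z) = 0 := by
  simp only [mul_assoc]
  rw [← mul_assoc x x, hx, zero_mul, mul_zero, mul_zero]

end AC2

variable {a b : ℤ}

lemma signCount_update_not_lt (g : Config a b) (j : {x : ℤ // x ∈ Finset.Icc a b})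
    (v : Bool) (i : ℤ) (h : ¬ j.1 < i) :
    signCount a b (Function.update g j v) i = signCount a b g i := by
  unfold signCount
  congr 1
  apply Finset.filter_congr
  intro x _
  by_cases hx : x.1 < i
  · have hxj : x ≠ j := by rintro rfl; exact h hx
    simp [Function.update_of_ne hxj]
  · simp [hx]

lemma signCount_update_lt (g : Config a b) (j : {x : ℤ // x ∈ Finset.Icc a b})
    (i : ℤ) (h : j.1 < i) (hg : g j = false) :
    signCount a b (Function.update g j true) i = signCount a b g i + 1 := by
  unfold signCount
  have hins : (Finset.univ.filter
        fun x : {x : ℤ // x ∈ Finset.Icc a b} => x.1 < i ∧ Function.update g j true x = true)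
      = insert j (Finset.univ.filter
        fun x : {x : ℤ // x ∈ Finset.Icc a b} => x.1 < i ∧ g x = true) := by
    ext x
    simp only [Finset.mem_insert, Finset.mem_filter, Finset.mem_univ, true_and]
    by_cases hxj : x = j
    · subst hxj; simp [h]
    · simp [Function.update_of_ne hxj, hxj]
  rw [hins, Finset.card_insert_of_notMem (by simp [hg])]

lemma signCount_update_lt' (g : Config a b) (j : {x : ℤ // x ∈ Finset.Icc a b})
    (i : ℤ) (h : j.1 < i) (hg : g j = true) :
    signCount a b g i = signCount a b (Function.update g j false) i + 1 := by
  have hg' : (Function.update g j false) j = false := by simp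
  have := signCount_update_lt (Function.update g j false) j i h hg'
  rwa [Function.update_idem, ← hg, Function.update_eq_self] at this

lemma sign_update (g : Config a b) (j : {x : ℤ // x ∈ Finset.Icc a b}) (v : Bool)
    (i : ℤ) (h : j.1 < i) (hg : g j = !v) :
    ((-1 : ℂ) ^ signCount a b (Function.update g j v) i)
      = -((-1 : ℂ) ^ signCount a b g i) := by
  cases v
  · rw [signCount_update_lt' g j i h (by simpa using hg), pow_succ]
    ring
  · rw [signCount_update_lt g j i h (by simpa using hg), pow_succ]
    ring


variable {a b : ℤ}

/-- Unified creation/annihilation: `gen a b i true = cAnn`, `gen a b i false = cCr`. -/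
noncomputable def gen (a b i : ℤ) (u : Bool) : Module.End ℂ (Hs a b) :=
  if u then cAnn a b i else cCr a b i

lemma gen_true (i : ℤ) : gen a b i true = cAnn a b i := rfl
lemma gen_false (i : ℤ) : gen a b i false = cCr a b i := rfl

lemma gen_apply (i : ℤ) (u : Bool) (ψ : Hs a b) (g : Config a b) :
    gen a b i u ψ g = if hi : i ∈ Finset.Icc a b then
      if g ⟨i, hi⟩ = !u then
        ((-1 : ℂ) ^ signCount a b g i) * ψ (Function.update g ⟨i, hi⟩ u)
      else 0
    else 0 := by
  cases u <;> rfl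

lemma gen_sq (i : ℤ) (u : Bool) : gen a b i u * gen a b i u = 0 := by
  apply LinearMap.ext
  intro ψ
  ext g
  simp only [Module.End.mul_apply, gen_apply, LinearMap.zero_apply]
  by_cases hi : i ∈ Finset.Icc a b
  · have e1 : Function.update g ⟨i, hi⟩ u ⟨i, hi⟩ = u := Function.update_self _ _ _
    by_cases hg : g ⟨i, hi⟩ = !u <;> simp [hi, hg, e1]
  · simp [hi]

lemma gen_anticomm (i j : ℤ) (hne : i ≠ j) (u v : Bool) :
    AC (gen a b i u) (gen a b j v) := by
  unfold AC
  apply LinearMap.ext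
  intro ψ
  ext g
  simp only [Module.End.mul_apply, LinearMap.neg_apply, PiLp.neg_apply, gen_apply]
  by_cases hi : i ∈ Finset.Icc a b
  · by_cases hj : j ∈ Finset.Icc a b
    · have hsub : (⟨i, hi⟩ : {x : ℤ // x ∈ Finset.Icc a b}) ≠ ⟨j, hj⟩ := by
        simp [Subtype.ext_iff, hne]
      have e1 : Function.update g ⟨i, hi⟩ u ⟨j, hj⟩ = g ⟨j, hj⟩ :=
        Function.update_of_ne hsub.symm _ _
      have e2 : Function.update g ⟨j, hj⟩ v ⟨i, hi⟩ = g ⟨i, hi⟩ :=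
        Function.update_of_ne hsub _ _
      simp only [dif_pos hi, dif_pos hj, e1, e2]
      by_cases hgi : g ⟨i, hi⟩ = !u
      · by_cases hgj : g ⟨j, hj⟩ = !v
        · rw [if_pos hgi, if_pos hgj, if_pos hgj, if_pos hgi, Function.update_comm hsub]
          rcases hne.lt_or_gt with hlt | hlt
          · rw [sign_update g ⟨i, hi⟩ u j hlt hgi,
              signCount_update_not_lt g ⟨j, hj⟩ v i (not_lt.2 hlt.le)]
            ring
          · rw [sign_update g ⟨j, hj⟩ v i hlt hgj,
              signCount_update_not_lt g ⟨i, hi⟩ u j (not_lt.2 hlt.le)]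
            ring
        · simp [hgi, hgj]
      · by_cases hgj : g ⟨j, hj⟩ = !v <;> simp [hgi, hgj]
    · simp [hj]
  · simp [hi]


variable {a b : ℤ}

lemma qOp_eq (i : ℤ) :
    qOp a b i = gen a b (2 * i + 1) true * gen a b (2 * i) false * gen a b (2 * i - 1) true :=
  rfl

lemma qOp_sq (i : ℤ) : qOp a b i * qOp a b i = 0 := by
  rw [qOp_eq]
  exact nilp_sq (gen_anticomm _ _ (by omega) _ _) (gen_anticomm _ _ (by omega) _ _)
    (gen_sq _ _)

lemma qOp_adj1 (i : ℤ) : qOp a b i * qOp a b (i + 1) = 0 := by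
  have h21 : 2 * (i + 1) - 1 = 2 * i + 1 := by ring
  rw [qOp_eq i, qOp_eq (i + 1), h21]
  exact nilp_adj1 (gen_anticomm _ _ (by omega) _ _) (gen_anticomm _ _ (by omega) _ _)
    (gen_anticomm _ _ (by omega) _ _) (gen_anticomm _ _ (by omega) _ _) (gen_sq _ _)

lemma qOp_adj2 (i : ℤ) : qOp a b (i + 1) * qOp a b i = 0 := by
  have h21 : 2 * (i + 1) - 1 = 2 * i + 1 := by ring
  rw [qOp_eq i, qOp_eq (i + 1), h21]
  exact nilp_adj2 (gen_sq _ _)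

lemma qOp_anticomm (i j : ℤ) :
    qOp a b i * qOp a b j + qOp a b j * qOp a b i = 0 := by
  rcases eq_or_ne i j with rfl | hne
  · rw [qOp_sq]; simp
  · by_cases h1 : j = i + 1
    · subst h1; rw [qOp_adj1, qOp_adj2]; simp
    · by_cases h2 : i = j + 1
      · subst h2; rw [qOp_adj1, qOp_adj2]; simp
      · have hAC : AC (qOp a b i) (qOp a b j) := by
          rw [qOp_eq i, qOp_eq j]
          refine AC.mul_left3 ?_ ?_ ?_ <;>
            exact AC.mul_right3 (gen_anticomm _ _ (by omega) _ _)
              (gen_anticomm _ _ (by omega) _ _) (gen_anticomm _ _ (by omega) _ _)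
        rw [hAC, neg_add_cancel]

theorem QNic_sq (a b k l : ℤ) : QNic a b k l * QNic a b k l = 0 := by
  have h2 : QNic a b k l * QNic a b k l + QNic a b k l * QNic a b k l = 0 := by
    rw [QNic, Finset.sum_mul_sum]
    nth_rewrite 2 [Finset.sum_comm]
    rw [← Finset.sum_add_distrib]
    refine Finset.sum_eq_zero fun i _ => ?_
    rw [← Finset.sum_add_distrib]
    exact Finset.sum_eq_zero fun j _ => qOp_anticomm i j
  have h3 : (2 : ℂ) • (QNic a b k l * QNic a b k l) = 0 := by
    rw [two_smul]; exact h2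
  rcases smul_eq_zero.mp h3 with h | h
  · norm_num at h
  · exact h


/-- the Nicolai supercharge is nilpotent, and so is its adjoint. -/
theorem nicolai_supercharge_nilpotent (a b k l : ℤ) (hkl : k ≤ l)
    (hS : Finset.Icc (2 * k - 1) (2 * l + 1) ⊆ Finset.Icc a b) :
    QNic a b k l * QNic a b k l = 0 ∧
    LinearMap.adjoint (QNic a b k l) * LinearMap.adjoint (QNic a b k l) = 0 := by
  refine ⟨QNic_sq a b k l, ?_⟩
  have h := QNic_sq a b k l
  rw [Module.End.mul_eq_comp, ← LinearMap.adjoint_comp, ← Module.End.mul_eq_comp, h]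
  have hz : LinearMap.adjoint (0 : Module.End ℂ (Hs a b)) = 0 := by
    apply LinearMap.ext
    intro ψ
    apply ext_inner_left ℂ
    intro v
    rw [LinearMap.adjoint_inner_right]
    simp
  exact hz

end Nicolai
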